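/- For any real-valued random variable X, reals a ≤ b, and a monotone differentiable function g, the restricted expectation satisfies the integration-by-parts formula E[g(X) 1{a < X ≤ b}] = g(a)P(X > a) − g(b)P(X > b) + ∫_a^b g'(y) P(X > y) dy. -/

import Mathlib

open MeasureTheory

open Set in
private lemma key (μ : Measure ℝ) [IsFiniteMeasure μ] {a b : ℝ} (hab : a ≤ b)
    (g g' : ℝ → ℝ) (hg : Monotone g) (hg' : ∀ y, HasDerivAt g (g' y) y) :
    ∫ x in Ioc a b, g x ∂μ
      = g a * (μ (Ioi a)).toReal - g b * (μ (Ioi b)).toReal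
        + ∫ y in a..b, g' y * (μ (Ioi y)).toReal := by
  -- nonnegativity of g'
  have hg'nn : ∀ y, 0 ≤ g' y := by
    intro y
    have h : HasDerivWithinAt g (g' y) (Ioi y) y := (hg' y).hasDerivWithinAt
    have h1 : Filter.Tendsto (slope g y) (nhdsWithin y (Ioi y \ {y})) (nhds (g' y)) :=
      hasDerivWithinAt_iff_tendsto_slope.1 h
    have hIoi : Ioi y \ {y} = Ioi y := by
      apply diff_singleton_eq_self; simp
    rw [hIoi] at h1
    refine ge_of_tendsto h1 ?_
    filter_upwards [self_mem_nhdsWithin] with x hx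
    have : (0:ℝ) ≤ (g x - g y) / (x - y) :=
      div_nonneg (sub_nonneg.2 (hg (le_of_lt hx))) (sub_nonneg.2 (le_of_lt hx))
    simpa [slope_def_field, div_eq_inv_mul] using this
  have hgd : Differentiable ℝ g := fun y => (hg' y).differentiableAt
  have hg'meas : Measurable g' := by
    have : g' = deriv g := funext fun y => ((hg' y).deriv).symm
    rw [this]; exact measurable_deriv g
  have hint : IntegrableOn g' (Ioc a b) volume :=
    intervalIntegral.integrableOn_deriv_of_nonneg hgd.continuous.continuousOn
      (fun x _ => hg' x) (fun x _ => hg'nn x)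
  -- FTC
  have hFTC : ∀ x, a ≤ x → ∫ y in Ioc a x, g' y = g x - g a := by
    intro x hax
    have hii : IntervalIntegrable g' volume a x := by
      refine intervalIntegral.intervalIntegrable_deriv_of_nonneg hgd.continuous.continuousOn
        (fun y _ => hg' y) (fun y _ => hg'nn y)
    rw [← intervalIntegral.integral_of_le hax]
    exact intervalIntegral.integral_eq_sub_of_hasDerivAt (fun y _ => hg' y) hii
  set f : ℝ → ENNReal := fun y => ENNReal.ofReal (g' y) with hf
  have hfmeas : Measurable f := hg'meas.ennreal_ofReal
  have hfin : ∫⁻ y in Ioc a b, f y ∂volume < ⊤ := by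
    have h2 := hint.2
    rwa [hasFiniteIntegral_iff_ofReal (ae_of_all _ hg'nn)] at h2
  set H : ℝ → ℝ := fun x => (∫⁻ y in Ioc a (min x b), f y ∂volume).toReal with hH
  have hfinx : ∀ x, ∫⁻ y in Ioc a (min x b), f y ∂volume ≠ ⊤ := fun x =>
    ((lintegral_mono_set (Ioc_subset_Ioc_right (min_le_right x b))).trans_lt hfin).ne
  have hHmono : Monotone H := fun x x' hx =>
    ENNReal.toReal_mono (hfinx x')
      (lintegral_mono_set (Ioc_subset_Ioc_right (min_le_min hx le_rfl)))
  have hHnn : ∀ x, 0 ≤ H x := fun x => ENNReal.toReal_nonneg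
  -- H equals the real integral of g'
  have hHx : ∀ x ∈ Ioc a b, g x = g a + H x := by
    intro x hx
    have hmin : min x b = x := min_eq_left hx.2
    have h1 : H x = ∫ y in Ioc a x, g' y := by
      rw [hH]
      simp only [hmin]
      rw [integral_eq_lintegral_of_nonneg_ae (ae_of_all _ hg'nn)
        hg'meas.aestronglyMeasurable.restrict]
    rw [h1, hFTC x hx.1.le]; ring
  -- split the integral
  have hHint : IntegrableOn H (Ioc a b) μ := by
    refine Integrable.mono' (integrable_const (H b)) hHmono.measurable.aestronglyMeasurable.restrict ?_
    filter_upwards [ae_restrict_mem measurableSet_Ioc] with x hx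
    rw [Real.norm_of_nonneg (hHnn x)]
    exact hHmono hx.2
  have hsplit : ∫ x in Ioc a b, g x ∂μ
      = g a * (μ (Ioc a b)).toReal + ∫ x in Ioc a b, H x ∂μ := by
    rw [setIntegral_congr_fun measurableSet_Ioc hHx, integral_add (integrable_const _) hHint]
    simp [Measure.restrict_apply_univ, mul_comm, measureReal_def]
  have hswap : ∫ x in Ioc a b, H x ∂μ = ∫ y in Ioc a b, g' y * (μ (Ioc y b)).toReal := by
    have hcmeas : Measurable fun y => (μ (Ioc y b)).toReal := by
      have hanti : Antitone fun y => (μ (Ioc y b)).toReal := fun y y' h =>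
        ENNReal.toReal_mono (measure_ne_top μ _) (measure_mono (Ioc_subset_Ioc_left h))
      exact hanti.measurable
    have h1 : ∫ x in Ioc a b, H x ∂μ
        = (∫⁻ x in Ioc a b, ENNReal.ofReal (H x) ∂μ).toReal := by
      rw [integral_eq_lintegral_of_nonneg_ae (ae_of_all _ hHnn)
        hHmono.measurable.aestronglyMeasurable.restrict]
    have h2 : ∀ x ∈ Ioc a b, ENNReal.ofReal (H x)
        = ∫⁻ y in Ioc a b, (Iio x).indicator f y ∂volume := by
      intro x hx
      rw [hH]
      simp only [min_eq_left hx.2]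
      rw [ENNReal.ofReal_toReal (by simpa [min_eq_left hx.2] using hfinx x)]
      rw [lintegral_indicator measurableSet_Iio, Measure.restrict_restrict measurableSet_Iio]
      have hset : Iio x ∩ Ioc a b = Ioo a x := by
        ext y
        simp only [mem_inter_iff, mem_Iio, mem_Ioc, mem_Ioo]
        constructor
        · rintro ⟨h1, h2, _⟩; exact ⟨h2, h1⟩
        · rintro ⟨h1, h2⟩; exact ⟨h2, h1, le_trans h2.le hx.2⟩
      rw [hset]
      exact (setLIntegral_congr Ioo_ae_eq_Ioc).symm
    have h3 : ∀ y ∈ Ioc a b,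
        (∫⁻ x in Ioc a b, (Iio x).indicator f y ∂μ) = f y * μ (Ioc y b) := by
      intro y hy
      have heq : ∀ x, (Iio x).indicator f y = (Ioi y).indicator (fun _ => f y) x := by
        intro x
        by_cases h : y < x
        · simp [indicator_of_mem, h, mem_Iio, mem_Ioi]
        · simp [indicator_of_notMem, h, mem_Iio, mem_Ioi]
      simp_rw [heq]
      rw [lintegral_indicator measurableSet_Ioi, setLIntegral_const,
        Measure.restrict_apply measurableSet_Ioi]
      congr 1
      congr 1
      ext x
      simp only [mem_inter_iff, mem_Ioi, mem_Ioc]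
      constructor
      · rintro ⟨h1, _, h3⟩; exact ⟨h1, h3⟩
      · rintro ⟨h1, h2⟩; exact ⟨h1, lt_trans hy.1 h1, h2⟩
    have hswap0 : ∫⁻ x in Ioc a b, (∫⁻ y in Ioc a b, (Iio x).indicator f y ∂volume) ∂μ
        = ∫⁻ y in Ioc a b, (∫⁻ x in Ioc a b, (Iio x).indicator f y ∂μ) ∂volume := by
      rw [lintegral_lintegral_swap]
      apply Measurable.aemeasurable
      have heq : (fun p : ℝ × ℝ => (Iio p.1).indicator f p.2)
          = {p : ℝ × ℝ | p.2 < p.1}.indicator (fun p => f p.2) := by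
        ext p
        by_cases h : p.2 < p.1
        · simp [indicator_of_mem, h, mem_Iio]
        · simp [indicator_of_notMem, h, mem_Iio]
      rw [Function.uncurry_def]
      rw [heq]
      exact (hfmeas.comp measurable_snd).indicator (measurableSet_lt measurable_snd measurable_fst)
    calc ∫ x in Ioc a b, H x ∂μ
        = (∫⁻ x in Ioc a b, (∫⁻ y in Ioc a b, (Iio x).indicator f y ∂volume) ∂μ).toReal := by
          rw [h1]; congr 1; exact setLIntegral_congr_fun measurableSet_Ioc h2
      _ = (∫⁻ y in Ioc a b, (∫⁻ x in Ioc a b, (Iio x).indicator f y ∂μ) ∂volume).toReal := by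
          rw [hswap0]
      _ = (∫⁻ y in Ioc a b, f y * μ (Ioc y b) ∂volume).toReal := by
          congr 1; exact setLIntegral_congr_fun measurableSet_Ioc h3
      _ = ∫ y in Ioc a b, g' y * (μ (Ioc y b)).toReal := by
          rw [integral_eq_lintegral_of_nonneg_ae
            (ae_of_all _ fun y => mul_nonneg (hg'nn y) ENNReal.toReal_nonneg)
            ((hg'meas.mul hcmeas).aestronglyMeasurable.restrict)]
          congr 1
          refine setLIntegral_congr_fun measurableSet_Ioc (fun y _ => ?_)
          beta_reduce
          rw [ENNReal.ofReal_mul (hg'nn y), ENNReal.ofReal_toReal (measure_ne_top μ _), hf]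
  -- decomposition of tail probabilities
  have hμIoc : ∀ y, y ≤ b → (μ (Ioc y b)).toReal = (μ (Ioi y)).toReal - (μ (Ioi b)).toReal := by
    intro y hy
    have hset : Ioc y b = Ioi y \ Ioi b := by
      ext t
      simp only [mem_Ioc, mem_Ioi, mem_diff, not_lt]
    rw [hset, measure_diff (Ioi_subset_Ioi hy) measurableSet_Ioi.nullMeasurableSet
      (measure_ne_top μ _),
      ENNReal.toReal_sub_of_le (measure_mono (Ioi_subset_Ioi hy)) (measure_ne_top μ _)]
  have hcanti : Antitone fun y => (μ (Ioi y)).toReal := fun y y' h =>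
    ENNReal.toReal_mono (measure_ne_top μ _) (measure_mono (Ioi_subset_Ioi h))
  have hintc : IntegrableOn (fun y => g' y * (μ (Ioi y)).toReal) (Ioc a b) volume := by
    refine Integrable.mono' (hint.norm.const_mul ((μ univ).toReal))
      ((hg'meas.mul hcanti.measurable).aestronglyMeasurable.restrict) ?_
    refine ae_of_all _ fun y => ?_
    rw [Real.norm_of_nonneg (mul_nonneg (hg'nn y) ENNReal.toReal_nonneg), Real.norm_of_nonneg (hg'nn y)]
    rw [mul_comm ((μ univ).toReal)]
    exact mul_le_mul_of_nonneg_left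
      (ENNReal.toReal_mono (measure_ne_top μ _) (measure_mono (subset_univ _))) (hg'nn y)
  have hsub : ∫ y in Ioc a b, g' y * (μ (Ioc y b)).toReal
      = (∫ y in Ioc a b, g' y * (μ (Ioi y)).toReal) - (g b - g a) * (μ (Ioi b)).toReal := by
    have h1 : ∀ y ∈ Ioc a b, g' y * (μ (Ioc y b)).toReal
        = g' y * (μ (Ioi y)).toReal - g' y * (μ (Ioi b)).toReal := by
      intro y hy; rw [hμIoc y hy.2]; ring
    rw [setIntegral_congr_fun measurableSet_Ioc h1,
      integral_sub hintc (hint.mul_const _), integral_mul_const, hFTC b hab]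
  rw [hsplit, hswap, hsub, ← intervalIntegral.integral_of_le hab]
  have hIocab : (μ (Ioc a b)).toReal = (μ (Ioi a)).toReal - (μ (Ioi b)).toReal := hμIoc a hab
  rw [hIocab]
  ring

open Set in
/-- Integration-by-parts formula for restricted expectations: for a real
random variable `X`, reals `a ≤ b`, and a monotone differentiable `g`,
`E[g(X) 1{a < X ≤ b}] = g(a)P(X > a) − g(b)P(X > b) + ∫_a^b g'(y)P(X > y) dy`. -/
theorem stmt_7
    {Ω : Type*} [MeasurableSpace Ω] (P : Measure Ω) [IsProbabilityMeasure P]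
    (X : Ω → ℝ) (hX : Measurable X)
    (a b : ℝ) (hab : a ≤ b)
    (g g' : ℝ → ℝ) (hg : Monotone g ∨ Antitone g)
    (hg' : ∀ y, HasDerivAt g (g' y) y) :
    ∫ ω in {ω | a < X ω ∧ X ω ≤ b}, g (X ω) ∂P
      = g a * (P {ω | a < X ω}).toReal - g b * (P {ω | b < X ω}).toReal
        + ∫ y in a..b, g' y * (P {ω | y < X ω}).toReal := by
  set μ : Measure ℝ := P.map X with hμ
  have : IsProbabilityMeasure μ := Measure.isProbabilityMeasure_map hX.aemeasurable
  have hgd : Differentiable ℝ g := fun y => (hg' y).differentiableAt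
  have hP : ∀ y, P {ω | y < X ω} = μ (Ioi y) := fun y =>
    (Measure.map_apply hX measurableSet_Ioi).symm
  have hsetEq : {ω | a < X ω ∧ X ω ≤ b} = X ⁻¹' (Ioc a b) := rfl
  have hI : ∫ ω in {ω | a < X ω ∧ X ω ≤ b}, g (X ω) ∂P = ∫ x in Ioc a b, g x ∂μ := by
    rw [hsetEq, hμ, setIntegral_map measurableSet_Ioc
      hgd.continuous.stronglyMeasurable.aestronglyMeasurable hX.aemeasurable]
  simp only [hP, hI]
  rcases hg with hmono | hanti
  · exact key μ hab g g' hmono hg'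
  · have hmono : Monotone fun x => -g x := fun x y h => neg_le_neg (hanti h)
    have h := key μ hab (fun x => -g x) (fun x => -g' x) hmono (fun y => (hg' y).neg)
    simp only [integral_neg, neg_mul] at h
    rw [intervalIntegral.integral_neg] at h
    linarith
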